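/- arXiv:1906.02120 — 2 statements merged into one kernel-verified Lean document; each statement's English description precedes it below -/
import Mathlib

section
/- Stationarity of the targeted regularization objective in ε implies the non-parametric estimating equation: fix functions Q̂: {0,1}×𝒳 → ℝ and ĝ: 𝒳 → (0,1), data points (yᵢ, tᵢ, xᵢ) for i = 1,…,n, and define H(t,x) = t/ĝ(x) − (1−t)/(1−ĝ(x)), Q̃_ε(t,x) = Q̂(t,x) + ε·H(t,x), L(ε) = (1/n)Σᵢ (yᵢ − Q̃_ε(tᵢ,xᵢ))², and ψ(ε) = (1/n)Σᵢ (Q̃_ε(1,xᵢ) − Q̃_ε(0,xᵢ)). If L′(ε̂) = 0, then (1/n)Σᵢ φ(yᵢ,tᵢ,xᵢ; Q̃_{ε̂}, ĝ, ψ(ε̂)) = 0, where φ(y,t,x;Q,g,ψ) = Q(1,x) − Q(0,x) + H(t,x)(y − Q(t,x)) − ψ. -/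
open Finset

/-- stationarity of the targeted-regularization objective in ε implies the
non-parametric estimating equation for the perturbed outcome model. -/
theorem treg_stationarity_implies_npee {𝒳 : Type*} (n : ℕ) (hn : 0 < n)
    (y : Fin n → ℝ) (t : Fin n → ℝ) (x : Fin n → 𝒳)
    (ht : ∀ i, t i = 0 ∨ t i = 1)
    (Qhat : ℝ → 𝒳 → ℝ) (ghat : 𝒳 → ℝ)
    (hg : ∀ i, 0 < ghat (x i) ∧ ghat (x i) < 1)
    (H : ℝ → 𝒳 → ℝ)
    (hH : ∀ s z, H s z = s / ghat z - (1 - s) / (1 - ghat z))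
    (Qtil : ℝ → ℝ → 𝒳 → ℝ)
    (hQtil : ∀ ε s z, Qtil ε s z = Qhat s z + ε * H s z)
    (L : ℝ → ℝ)
    (hL : ∀ ε, L ε = (1 / n) * ∑ i, (y i - Qtil ε (t i) (x i)) ^ 2)
    (ψ : ℝ → ℝ)
    (hψ : ∀ ε, ψ ε = (1 / n) * ∑ i, (Qtil ε 1 (x i) - Qtil ε 0 (x i)))
    (φ : ℝ → ℝ → 𝒳 → (ℝ → 𝒳 → ℝ) → ℝ → ℝ)
    (hφ : ∀ a s z Q p, φ a s z Q p = Q 1 z - Q 0 z + H s z * (a - Q s z) - p)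
    (εhat : ℝ) (hstat : HasDerivAt L 0 εhat) :
    (1 / n) * ∑ i, φ (y i) (t i) (x i) (Qtil εhat) (ψ εhat) = 0 := by
  -- derivative of L
  have hLfun : L = fun ε => (1 / (n:ℝ)) * ∑ i, (y i - Qhat (t i) (x i) - ε * H (t i) (x i)) ^ 2 := by
    funext ε
    rw [hL]
    congr 1
    apply Finset.sum_congr rfl
    intro i _
    rw [hQtil]
    ring
  have hderiv : HasDerivAt L
      ((1 / (n:ℝ)) * ∑ i, 2 * (y i - Qhat (t i) (x i) - εhat * H (t i) (x i)) * (-(H (t i) (x i)))) εhat := by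
    rw [hLfun]
    apply HasDerivAt.const_mul
    apply HasDerivAt.fun_sum
    intro i _
    have h1 : HasDerivAt (fun ε => y i - Qhat (t i) (x i) - ε * H (t i) (x i))
        (-(H (t i) (x i))) εhat := by
      simpa using (HasDerivAt.const_sub (y i - Qhat (t i) (x i))
        ((hasDerivAt_id εhat).mul_const (H (t i) (x i))))
    simpa [pow_two, mul_comm, mul_assoc, mul_left_comm] using (h1.fun_pow 2)
  have hD : (1 / (n:ℝ)) * ∑ i, 2 * (y i - Qhat (t i) (x i) - εhat * H (t i) (x i)) * (-(H (t i) (x i))) = 0 :=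
    hderiv.unique hstat
  have hn' : (n:ℝ) ≠ 0 := Nat.cast_ne_zero.mpr hn.ne'
  have hkey : ∑ i, H (t i) (x i) * (y i - Qtil εhat (t i) (x i)) = 0 := by
    have h2 : ∑ i, 2 * (y i - Qhat (t i) (x i) - εhat * H (t i) (x i)) * (-(H (t i) (x i))) = 0 := by
      rcases mul_eq_zero.mp hD with h | h
      · exact absurd h (by positivity)
      · exact h
    have h3 : ∑ i, 2 * (y i - Qhat (t i) (x i) - εhat * H (t i) (x i)) * (-(H (t i) (x i)))
        = (-2) * ∑ i, H (t i) (x i) * (y i - Qtil εhat (t i) (x i)) := by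
      rw [Finset.mul_sum]
      apply Finset.sum_congr rfl
      intro i _
      rw [hQtil]
      ring
    have := h3 ▸ h2
    linarith [this]
  have hφsum : ∑ i, φ (y i) (t i) (x i) (Qtil εhat) (ψ εhat)
      = ∑ i, (Qtil εhat 1 (x i) - Qtil εhat 0 (x i)) + ∑ i, H (t i) (x i) * (y i - Qtil εhat (t i) (x i)) - n * ψ εhat := by
    simp only [hφ]
    rw [Finset.sum_sub_distrib, Finset.sum_add_distrib, Finset.sum_const, Finset.card_univ,
      Fintype.card_fin, nsmul_eq_mul]
  rw [hφsum, hkey, hψ]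
  field_simp
  ring
end

section
/- Conditional ignorability given X implies conditional ignorability given the propensity score: if E[Y(1) | X, T] = E[Y(1) | X] and E[Y(0) | X, T] = E[Y(0) | X] (mean ignorability), and 0 < g(X) < 1 a.s. with g(x) = P(T=1|X=x), then E[Y(1) | g(X), T] = E[Y(1) | g(X)] and E[Y(0) | g(X), T] = E[Y(0) | g(X)]. -/
open MeasureTheory

section Aux

/-- Abstract core: if `G` is a version of `E[T | mX]`, `G` is `mG`-measurable and bounded,
`mG ≤ mX`, `mGT` is generated by sets `G⁻¹A ∩ T⁻¹B`, and `E[Y|mXT] = E[Y|mX]`, then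
`E[Y|mGT] = E[Y|mG]`. -/
lemma aux_ignorability_transfer {Ω : Type*} (mX mXT mG mGT : MeasurableSpace Ω)
    [m0 : MeasurableSpace Ω] (μ : Measure Ω) [IsProbabilityMeasure μ]
    (T G Y : Ω → ℝ)
    (hT : Measurable T) (hTbin : ∀ ω, T ω = 0 ∨ T ω = 1)
    (hmG : mG ≤ mX) (hmX : mX ≤ m0) (hmGT : mGT ≤ mXT) (hmXT : mXT ≤ m0)
    (hmG_GT : mG ≤ mGT)
    (hGmG : Measurable[mG] G)
    (hGbd : ∀ᵐ ω ∂μ, ‖G ω‖ ≤ 1)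
    (hTX : G =ᵐ[μ] μ[T | mX])
    (hGTgen : mGT = MeasurableSpace.generateFrom
      {s : Set Ω | ∃ A B : Set ℝ, MeasurableSet A ∧ MeasurableSet B ∧
        s = G ⁻¹' A ∩ T ⁻¹' B})
    (hY : Integrable Y μ)
    (hig : μ[Y | mXT] =ᵐ[μ] μ[Y | mX]) :
    μ[Y | mGT] =ᵐ[μ] μ[Y | mG] := by
  have hmG0 : mG ≤ m0 := hmG.trans hmX
  have hmGT0 : mGT ≤ m0 := hmGT.trans hmXT
  have hTbd : ∀ ω, ‖T ω‖ ≤ 1 := fun ω => by rcases hTbin ω with h | h <;> simp [h]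
  have hTint : Integrable T μ :=
    (integrable_const (1 : ℝ)).mono' hT.aestronglyMeasurable (Filter.Eventually.of_forall hTbd)
  have hGsmG : StronglyMeasurable[mG] G := hGmG.stronglyMeasurable
  have hGsm : AEStronglyMeasurable G μ := (hGsmG.mono hmG0).aestronglyMeasurable
  have hGint : Integrable G μ := (integrable_const (1 : ℝ)).mono' hGsm hGbd
  -- G is also a version of E[T | mG]
  have hTG : G =ᵐ[μ] μ[T | mG] := by
    have h1 : μ[μ[T | mX] | mG] =ᵐ[μ] μ[T | mG] := condExp_condExp_of_le hmG hmX
    have h2 : μ[μ[T | mX] | mG] =ᵐ[μ] μ[G | mG] := condExp_congr_ae hTX.symm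
    rw [condExp_of_stronglyMeasurable hmG0 hGsmG hGint] at h2
    exact h2.symm.trans h1
  set Z : Ω → ℝ := μ[Y | mX] with hZdef
  set W : Ω → ℝ := μ[Z | mG] with hWdef
  have hZint : Integrable Z μ := integrable_condExp
  have hWint : Integrable W μ := integrable_condExp
  have hZsm : StronglyMeasurable[mX] Z := stronglyMeasurable_condExp
  have hWsm : StronglyMeasurable[mG] W := stronglyMeasurable_condExp
  -- products with a bounded function are integrable
  have hmul : ∀ f b : Ω → ℝ, Integrable f μ → AEStronglyMeasurable b μ →
      (∀ᵐ ω ∂μ, ‖b ω‖ ≤ 1) → Integrable (f * b) μ := by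
    intro f b hf hb hbbd
    refine hf.norm.mono' (hf.aestronglyMeasurable.mul hb) ?_
    filter_upwards [hbbd] with ω h
    calc ‖(f * b) ω‖ = ‖f ω‖ * ‖b ω‖ := norm_mul _ _
      _ ≤ ‖f ω‖ * 1 := by gcongr
      _ = ‖f ω‖ := mul_one _
  have hZT : Integrable (Z * T) μ :=
    hmul Z T hZint hT.aestronglyMeasurable (Filter.Eventually.of_forall hTbd)
  have hWT : Integrable (W * T) μ :=
    hmul W T hWint hT.aestronglyMeasurable (Filter.Eventually.of_forall hTbd)
  have hGZ : Integrable (G * Z) μ := by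
    rw [mul_comm]; exact hmul Z G hZint hGsm hGbd
  -- pull-out properties
  have hpullW : μ[W * T | mG] =ᵐ[μ] W * μ[T | mG] :=
    condExp_mul_of_stronglyMeasurable_left hWsm hWT hTint
  have hpullZ : μ[Z * T | mX] =ᵐ[μ] Z * μ[T | mX] :=
    condExp_mul_of_stronglyMeasurable_left hZsm hZT hTint
  have hpullG : μ[G * Z | mG] =ᵐ[μ] G * μ[Z | mG] :=
    condExp_mul_of_stronglyMeasurable_left hGsmG hGZ hZint
  have hT1 : MeasurableSet {ω | T ω = 1} := hT (measurableSet_singleton 1)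
  have hind : ∀ (f : Ω → ℝ) (ω), Set.indicator {ω | T ω = 1} f ω = (f * T) ω := by
    intro f ω
    rcases hTbin ω with h | h
    · rw [Set.indicator_of_notMem (by simp [Set.mem_setOf_eq, h]), Pi.mul_apply, h, mul_zero]
    · rw [Set.indicator_of_mem (by simpa [Set.mem_setOf_eq] using h), Pi.mul_apply, h, mul_one]
  have hsplit : ∀ (f : Ω → ℝ) (S : Set Ω),
      ∫ ω in S ∩ {ω | T ω = 1}, f ω ∂μ = ∫ ω in S, (f * T) ω ∂μ := by
    intro f S
    rw [← setIntegral_indicator hT1]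
    exact integral_congr_ae (Filter.Eventually.of_forall fun ω => hind f ω)
  -- the key computation over sets S ∩ {T = 1}, S ∈ mG
  have hcore : ∀ S : Set Ω, MeasurableSet[mG] S →
      ∫ ω in S ∩ {ω | T ω = 1}, W ω ∂μ = ∫ ω in S ∩ {ω | T ω = 1}, Z ω ∂μ := by
    intro S hS
    have hSmX : MeasurableSet[mX] S := hmG S hS
    have hS0 : MeasurableSet S := hmG0 S hS
    rw [hsplit W S, hsplit Z S]
    have e1 : ∫ ω in S, (W * T) ω ∂μ = ∫ ω in S, (W * G) ω ∂μ := by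
      rw [← setIntegral_condExp hmG0 hWT hS]
      refine setIntegral_congr_ae hS0 ?_
      filter_upwards [hpullW, hTG] with ω h1 h2 _
      rw [h1, Pi.mul_apply, Pi.mul_apply, ← h2]
    have e2 : ∫ ω in S, (Z * T) ω ∂μ = ∫ ω in S, (Z * G) ω ∂μ := by
      rw [← setIntegral_condExp hmX hZT hSmX]
      refine setIntegral_congr_ae hS0 ?_
      filter_upwards [hpullZ, hTX] with ω h1 h2 _
      rw [h1, Pi.mul_apply, Pi.mul_apply, ← h2]
    have e3 : ∫ ω in S, (W * G) ω ∂μ = ∫ ω in S, (Z * G) ω ∂μ := by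
      calc ∫ ω in S, (W * G) ω ∂μ
          = ∫ ω in S, (G * W) ω ∂μ :=
            integral_congr_ae (Filter.Eventually.of_forall fun ω => mul_comm _ _)
        _ = ∫ ω in S, (μ[G * Z | mG]) ω ∂μ := by
            refine (setIntegral_congr_ae hS0 ?_).symm
            filter_upwards [hpullG] with ω h _
            rw [h]
        _ = ∫ ω in S, (G * Z) ω ∂μ := setIntegral_condExp hmG0 hGZ hS
        _ = ∫ ω in S, (Z * G) ω ∂μ :=
            integral_congr_ae (Filter.Eventually.of_forall fun ω => mul_comm _ _)
    rw [e1, e3, ← e2]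
  -- integrals agree on all of mGT, by the π-λ theorem
  have hsetint : ∀ s : Set Ω, MeasurableSet[mGT] s →
      ∫ ω in s, W ω ∂μ = ∫ ω in s, Z ω ∂μ := by
    have hpi : IsPiSystem {s : Set Ω | ∃ A B : Set ℝ, MeasurableSet A ∧ MeasurableSet B ∧
        s = G ⁻¹' A ∩ T ⁻¹' B} := by
      rintro s ⟨A, B, hA, hB, rfl⟩ t ⟨A', B', hA', hB', rfl⟩ -
      refine ⟨A ∩ A', B ∩ B', hA.inter hA', hB.inter hB', ?_⟩
      ext ω
      simp only [Set.mem_inter_iff, Set.mem_preimage, Set.mem_inter_iff]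
      tauto
    refine MeasurableSpace.induction_on_inter (m := mGT)
      (C := fun s _ => ∫ ω in s, W ω ∂μ = ∫ ω in s, Z ω ∂μ) hGTgen hpi (by simp) ?_ ?_ ?_
    · -- basic sets
      rintro t ⟨A, B, hA, hB, rfl⟩
      have hSmG : MeasurableSet[mG] (G ⁻¹' A) := hGmG hA
      have hbase : ∫ ω in G ⁻¹' A, W ω ∂μ = ∫ ω in G ⁻¹' A, Z ω ∂μ :=
        setIntegral_condExp hmG0 hZint hSmG
      by_cases h1 : (1 : ℝ) ∈ B <;> by_cases h0 : (0 : ℝ) ∈ B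
      · have hB' : T ⁻¹' B = Set.univ := by
          ext ω; simp only [Set.mem_preimage, Set.mem_univ, iff_true]
          rcases hTbin ω with h | h <;> rw [h] <;> assumption
        rw [hB', Set.inter_univ]
        exact hbase
      · have hB' : T ⁻¹' B = {ω | T ω = 1} := by
          ext ω; simp only [Set.mem_preimage, Set.mem_setOf_eq]
          constructor
          · intro hmem
            rcases hTbin ω with h | h
            · exact absurd (h ▸ hmem) h0
            · exact h
          · intro h; rw [h]; exact h1
        rw [hB']
        exact hcore _ hSmG
      · have hB' : T ⁻¹' B = {ω | T ω = 1}ᶜ := by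
          ext ω
          simp only [Set.mem_preimage, Set.mem_compl_iff, Set.mem_setOf_eq]
          constructor
          · intro hmem h; exact h1 (h ▸ hmem)
          · intro h
            rcases hTbin ω with h' | h'
            · rw [h']; exact h0
            · exact absurd h' h
        have hdiff : G ⁻¹' A ∩ {ω | T ω = 1}ᶜ = G ⁻¹' A \ {ω | T ω = 1} := by
          rw [Set.diff_eq]
        have hW := integral_inter_add_diff (f := W) (s := G ⁻¹' A) hT1 hWint.integrableOn
        have hZ := integral_inter_add_diff (f := Z) (s := G ⁻¹' A) hT1 hZint.integrableOn
        rw [hB', hdiff]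
        have := hcore _ hSmG
        linarith [hW, hZ, hbase, this]
      · have hB' : T ⁻¹' B = ∅ := by
          ext ω; simp only [Set.mem_preimage, Set.mem_empty_iff_false, iff_false]
          intro hmem
          rcases hTbin ω with h | h
          · exact h0 (h ▸ hmem)
          · exact h1 (h ▸ hmem)
        rw [hB', Set.inter_empty]
        simp
    · -- complements
      intro t ht hC
      have ht0 : MeasurableSet t := hmGT0 t ht
      rw [setIntegral_compl ht0 hWint, setIntegral_compl ht0 hZint, hC,
        integral_condExp hmG0]
    · -- disjoint unions
      intro f hdisj hmeas hC
      rw [integral_iUnion (fun i => hmGT0 _ (hmeas i)) hdisj hWint.integrableOn,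
        integral_iUnion (fun i => hmGT0 _ (hmeas i)) hdisj hZint.integrableOn]
      exact tsum_congr hC
  have hmain : W =ᵐ[μ] μ[Z | mGT] :=
    ae_eq_condExp_of_forall_setIntegral_eq hmGT0 hZint (fun s _ _ => hWint.integrableOn)
      (fun s hs _ => hsetint s hs) ((hWsm.mono hmG_GT).aestronglyMeasurable)
  calc μ[Y | mGT] =ᵐ[μ] μ[μ[Y | mXT] | mGT] := (condExp_condExp_of_le hmGT hmXT).symm
    _ =ᵐ[μ] μ[Z | mGT] := condExp_congr_ae hig
    _ =ᵐ[μ] W := hmain.symm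
    _ =ᵐ[μ] μ[Y | mG] := condExp_condExp_of_le hmG hmX

/-- Concrete version for a single outcome. -/
lemma aux_ignorability_single
    {Ω 𝒳 : Type*} [m0 : MeasurableSpace Ω] [MeasurableSpace 𝒳]
    (μ : Measure Ω) [IsProbabilityMeasure μ]
    (X : Ω → 𝒳) (T : Ω → ℝ) (Y : Ω → ℝ)
    (hX : Measurable X) (hT : Measurable T)
    (hY : Integrable Y μ)
    (hTbin : ∀ ω, T ω = 0 ∨ T ω = 1)
    (g : 𝒳 → ℝ) (hgm : Measurable g)
    (hg : ∀ A : Set 𝒳, MeasurableSet A →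
      ∫ ω in X ⁻¹' A, T ω ∂μ = ∫ ω in X ⁻¹' A, g (X ω) ∂μ)
    (hover : ∀ᵐ ω ∂μ, 0 < g (X ω) ∧ g (X ω) < 1)
    (hig : μ[Y | MeasurableSpace.comap (fun ω => (X ω, T ω)) inferInstance]
        =ᵐ[μ] μ[Y | MeasurableSpace.comap X inferInstance]) :
    μ[Y | MeasurableSpace.comap (fun ω => (g (X ω), T ω)) inferInstance]
        =ᵐ[μ] μ[Y | MeasurableSpace.comap (fun ω => g (X ω)) inferInstance] := by
  have hGmeas : Measurable fun ω => g (X ω) := hgm.comp hX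
  have hmX : MeasurableSpace.comap X inferInstance ≤ m0 := hX.comap_le
  have hmXT : MeasurableSpace.comap (fun ω => (X ω, T ω)) inferInstance ≤ m0 :=
    (hX.prodMk hT).comap_le
  have hmG : MeasurableSpace.comap (fun ω => g (X ω)) inferInstance
      ≤ MeasurableSpace.comap X inferInstance := by
    have h : MeasurableSpace.comap (fun ω => g (X ω)) inferInstance
        = MeasurableSpace.comap X (MeasurableSpace.comap g inferInstance) :=
      (MeasurableSpace.comap_comp (m := inferInstance) (f := g) (g := X)).symm
    rw [h]
    exact MeasurableSpace.comap_mono hgm.comap_le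
  have hmGT : MeasurableSpace.comap (fun ω => (g (X ω), T ω)) inferInstance
      ≤ MeasurableSpace.comap (fun ω => (X ω, T ω)) inferInstance := by
    have h : MeasurableSpace.comap (fun ω => (g (X ω), T ω)) inferInstance
        = MeasurableSpace.comap (fun ω => (X ω, T ω))
            (MeasurableSpace.comap (Prod.map g id) inferInstance) :=
      (MeasurableSpace.comap_comp (m := inferInstance) (f := Prod.map g id)
        (g := fun ω => (X ω, T ω))).symm
    rw [h]
    exact MeasurableSpace.comap_mono (hgm.prodMap measurable_id).comap_le
  have hmG_GT : MeasurableSpace.comap (fun ω => g (X ω)) inferInstance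
      ≤ MeasurableSpace.comap (fun ω => (g (X ω), T ω)) inferInstance := by
    have h : MeasurableSpace.comap (fun ω => g (X ω)) inferInstance
        = MeasurableSpace.comap (fun ω => (g (X ω), T ω))
            (MeasurableSpace.comap Prod.fst inferInstance) :=
      (MeasurableSpace.comap_comp (m := inferInstance) (f := Prod.fst)
        (g := fun ω => (g (X ω), T ω))).symm
    rw [h]
    exact MeasurableSpace.comap_mono measurable_fst.comap_le
  have hGmG : Measurable[MeasurableSpace.comap (fun ω => g (X ω)) inferInstance]
      fun ω => g (X ω) := Measurable.of_comap_le le_rfl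
  have hGbd : ∀ᵐ ω ∂μ, ‖g (X ω)‖ ≤ 1 := by
    filter_upwards [hover] with ω h
    rw [Real.norm_eq_abs, abs_of_pos h.1]
    exact h.2.le
  have hTbd : ∀ ω, ‖T ω‖ ≤ 1 := fun ω => by rcases hTbin ω with h | h <;> simp [h]
  have hTint : Integrable T μ :=
    (integrable_const (1 : ℝ)).mono' hT.aestronglyMeasurable (Filter.Eventually.of_forall hTbd)
  have hGint : Integrable (fun ω => g (X ω)) μ :=
    (integrable_const (1 : ℝ)).mono' hGmeas.aestronglyMeasurable hGbd
  have hTX : (fun ω => g (X ω)) =ᵐ[μ] μ[T | MeasurableSpace.comap X inferInstance] := by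
    refine ae_eq_condExp_of_forall_setIntegral_eq hmX hTint
      (fun s _ _ => hGint.integrableOn) (fun s hs _ => ?_)
      ((hGmG.stronglyMeasurable.mono hmG).aestronglyMeasurable)
    rw [MeasurableSpace.measurableSet_comap] at hs
    obtain ⟨A, hA, rfl⟩ := hs
    exact (hg A hA).symm
  have hGTgen : (MeasurableSpace.comap (fun ω => (g (X ω), T ω)) inferInstance
      : MeasurableSpace Ω) = MeasurableSpace.generateFrom
      {s : Set Ω | ∃ A B : Set ℝ, MeasurableSet A ∧ MeasurableSet B ∧
        s = (fun ω => g (X ω)) ⁻¹' A ∩ T ⁻¹' B} := by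
    rw [show (inferInstance : MeasurableSpace (ℝ × ℝ)) = Prod.instMeasurableSpace from rfl,
      ← generateFrom_prod, MeasurableSpace.comap_generateFrom]
    congr 1
    ext s
    constructor
    · rintro ⟨r, hr, rfl⟩
      obtain ⟨A, hA, B, hB, rfl⟩ := hr
      exact ⟨A, B, hA, hB, (Set.mk_preimage_prod _ _).symm⟩
    · rintro ⟨A, B, hA, hB, rfl⟩
      exact ⟨A ×ˢ B, Set.mem_image2_of_mem hA hB, Set.mk_preimage_prod _ _⟩
  exact aux_ignorability_transfer
    (MeasurableSpace.comap X inferInstance)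
    (MeasurableSpace.comap (fun ω => (X ω, T ω)) inferInstance)
    (MeasurableSpace.comap (fun ω => g (X ω)) inferInstance)
    (MeasurableSpace.comap (fun ω => (g (X ω), T ω)) inferInstance)
    μ T (fun ω => g (X ω)) Y hT hTbin hmG hmX hmGT hmXT hmG_GT hGmG hGbd hTX hGTgen hY hig

end Aux

/-- conditional (mean) ignorability given X implies conditional (mean)
ignorability given the propensity score g(X). -/
theorem ignorability_transfers_to_propensity
    {Ω 𝒳 : Type*} [m0 : MeasurableSpace Ω] [MeasurableSpace 𝒳]
    (μ : Measure Ω) [IsProbabilityMeasure μ]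
    (X : Ω → 𝒳) (T : Ω → ℝ) (Y1 Y0 : Ω → ℝ)
    (hX : Measurable X) (hT : Measurable T)
    (hY1 : Integrable Y1 μ) (hY0 : Integrable Y0 μ)
    (hTbin : ∀ ω, T ω = 0 ∨ T ω = 1)
    (g : 𝒳 → ℝ) (hgm : Measurable g)
    (hg : ∀ A : Set 𝒳, MeasurableSet A →
      ∫ ω in X ⁻¹' A, T ω ∂μ = ∫ ω in X ⁻¹' A, g (X ω) ∂μ)
    (hover : ∀ᵐ ω ∂μ, 0 < g (X ω) ∧ g (X ω) < 1)
    -- mean ignorability given X: E[Y(t) | X, T] = E[Y(t) | X]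
    (hig1 : μ[Y1 | MeasurableSpace.comap (fun ω => (X ω, T ω)) inferInstance]
        =ᵐ[μ] μ[Y1 | MeasurableSpace.comap X inferInstance])
    (hig0 : μ[Y0 | MeasurableSpace.comap (fun ω => (X ω, T ω)) inferInstance]
        =ᵐ[μ] μ[Y0 | MeasurableSpace.comap X inferInstance]) :
    (μ[Y1 | MeasurableSpace.comap (fun ω => (g (X ω), T ω)) inferInstance]
        =ᵐ[μ] μ[Y1 | MeasurableSpace.comap (fun ω => g (X ω)) inferInstance]) ∧
    (μ[Y0 | MeasurableSpace.comap (fun ω => (g (X ω), T ω)) inferInstance]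
        =ᵐ[μ] μ[Y0 | MeasurableSpace.comap (fun ω => g (X ω)) inferInstance]) :=
  ⟨aux_ignorability_single μ X T Y1 hX hT hY1 hTbin g hgm hg hover hig1,
   aux_ignorability_single μ X T Y0 hX hT hY0 hTbin g hgm hg hover hig0⟩
end
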